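/- Let C : ℝ → ℝ be nondecreasing with C(P) ≥ C_min for all P ≥ 0, where C_min ≥ 0. Let V > 0, C_rc ≥ 0, U ≥ 0, Z ≥ 0, and suppose X > −V·C_min. Then for all P and R with 0 < R ≤ P: (U + Z)·(P − R) − V·P·C(P) − V·C_rc − X·R < (U + Z)·(P − R) − V·(P − R)·C(P − R). Consequently, any optimal solution of problem P6 chooses recharge amount R* = 0 whenever X > −V·C_min. -/
import Mathlib

/-- Lemma 5, part 1 (Appendix C): when `X > -V·Cmin`, recharging by `R > 0`
gives a strictly smaller P6 objective value than the feasible alternative of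
drawing `P - R` from the grid with no battery action. -/
theorem stmt_14
    (C : ℝ → ℝ) (Cmin : ℝ)
    (hmono : Monotone C)
    (hlb : ∀ P : ℝ, 0 ≤ P → Cmin ≤ C P)
    (hCmin : 0 ≤ Cmin)
    (V Crc U Z X : ℝ)
    (hV : 0 < V) (hCrc : 0 ≤ Crc) (hU : 0 ≤ U) (hZ : 0 ≤ Z)
    (hX : X > -V * Cmin) :
    ∀ P R : ℝ, 0 < R → R ≤ P →
      (U + Z) * (P - R) - V * (P * C P) - V * Crc - X * R <
        (U + Z) * (P - R) - V * ((P - R) * C (P - R)) := by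
  intro P R hR hRP
  have h1 : C (P - R) ≤ C P := hmono (by linarith)
  have h2 : Cmin ≤ C (P - R) := hlb _ (by linarith)
  have h3 : (-V * Cmin) * R < X * R := mul_lt_mul_of_pos_right hX hR
  nlinarith [mul_nonneg hV.le hCrc, mul_pos hV hR,
    mul_nonneg (mul_pos hV hR).le (sub_nonneg.2 h1),
    mul_nonneg (mul_nonneg hV.le (by linarith : (0:ℝ) ≤ P)) (sub_nonneg.2 h1)]
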